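/- For d ≥ 2, let f_{d,0}(x) = 1{Σ_{j=1}^d x_j > d−1} for x ∈ [0,1]^d. Then the mean dimension of f_{d,0} with respect to X ~ U[0,1]^d equals ν(f_{d,0}) = d · (1 − 2/(d+1)) / (1 − 1/d!), and consequently ν(f_{d,0}) = d − 2 + o(1) as d → ∞, i.e., lim_{d→∞} (ν(f_{d,0}) − (d−2)) = 0. -/

import Mathlib

open MeasureTheory ProbabilityTheory Real Filter

noncomputable section

/-- Uniform measure on the cube `[0,1]^d`. -/
def unifCube (d : ℕ) : Measure (Fin d → ℝ) :=
  Measure.pi fun _ => (volume : Measure ℝ).restrict (Set.Icc 0 1)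

/-- Sobol' total index `τ̄²_j(f) = (1/2)·E[(f(X) − f(X_{−j}:Z_j))²]`
for `X, Z` independent and uniform on `[0,1]^d`. -/
def sobolTauU (d : ℕ) (f : (Fin d → ℝ) → ℝ) (j : Fin d) : ℝ :=
  (1 / 2) * ∫ p : (Fin d → ℝ) × (Fin d → ℝ),
    (f p.1 - f (Function.update p.1 j (p.2 j))) ^ 2
      ∂((unifCube d).prod (unifCube d))

/-- Mean dimension `ν(f) = (Σ_j τ̄²_j(f)) / Var(f(X))`. -/
def meanDimU (d : ℕ) (f : (Fin d → ℝ) → ℝ) : ℝ :=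
  (∑ j, sobolTauU d f j) / variance f (unifCube d)

/-- The cusp function `f_{d,p}(x) = (Σ_j x_j − (d−1))₊^p`, with the
convention that `f_{d,0}` is the indicator `1{Σ_j x_j > d−1}`. -/
def fdp (d : ℕ) (p : ℝ) (x : Fin d → ℝ) : ℝ :=
  if p = 0 then (if (d : ℝ) - 1 < ∑ j, x j then 1 else 0)
  else (max ((∑ j, x j) - ((d : ℝ) - 1)) 0) ^ p

def nu : Measure ℝ := (volume : Measure ℝ).restrict (Set.Icc 0 1)
instance : IsProbabilityMeasure nu := ⟨by simp [nu]⟩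
example (d : ℕ) : IsProbabilityMeasure (Measure.pi fun _ : Fin d => nu) := by infer_instance
-- indicator integral
lemma nu_ind (c : ℝ) (hc : 0 ≤ c) :
    ∫ t, (if c < t then (1:ℝ) else 0) ∂nu = max (1 - c) 0 := by
  have : (fun t => if c < t then (1:ℝ) else 0) = Set.indicator (Set.Ioi c) (fun _ => 1) := by
    ext t; simp [Set.indicator_apply, Set.mem_Ioi]
  rw [this, integral_indicator measurableSet_Ioi, setIntegral_const, smul_eq_mul, mul_one, nu,
    measureReal_def, Measure.restrict_apply measurableSet_Ioi]
  have h2 : Set.Ioi c ∩ Set.Icc (0:ℝ) 1 = Set.Ioc c 1 := by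
    ext t; simp only [Set.mem_inter_iff, Set.mem_Ioi, Set.mem_Icc, Set.mem_Ioc]
    constructor
    · rintro ⟨h1, _, h3⟩; exact ⟨h1, h3⟩
    · rintro ⟨h1, h3⟩; exact ⟨h1, le_trans hc h1.le, h3⟩
  rw [h2, Real.volume_Ioc, ENNReal.toReal_ofReal']

lemma cont_maxpow (c : ℝ) (k : ℕ) : Continuous (fun t : ℝ => (max (t - c) 0)^k) :=
  ((continuous_id.sub continuous_const).max continuous_const).pow k

lemma nu_pow (k : ℕ) (hk : 1 ≤ k) (c : ℝ) (hc : 0 ≤ c) :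
    ∫ t, (max (t - c) 0)^k ∂nu = (max (1 - c) 0)^(k+1) / ((k:ℝ)+1) := by
  have hk0 : (k:ℝ) + 1 ≠ 0 := by positivity
  have hIcc : ∫ t, (max (t - c) 0)^k ∂nu
      = ∫ t in (0:ℝ)..1, (max (t - c) 0)^k := by
    rw [nu, intervalIntegral.integral_of_le (by norm_num : (0:ℝ) ≤ 1)]
    exact MeasureTheory.integral_Icc_eq_integral_Ioc
  rw [hIcc]
  rcases le_or_gt c 1 with h1 | h1
  · have split : (∫ t in (0:ℝ)..c, (max (t - c) 0)^k) + (∫ t in c..1, (max (t - c) 0)^k)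
        = ∫ t in (0:ℝ)..1, (max (t - c) 0)^k :=
      intervalIntegral.integral_add_adjacent_intervals (μ := volume) (a := 0) (b := c) (c := 1)
        ((cont_maxpow c k).intervalIntegrable _ _) ((cont_maxpow c k).intervalIntegrable _ _)
    rw [← split]
    have e1 : ∫ t in (0:ℝ)..c, (max (t - c) 0)^k = 0 := by
      rw [intervalIntegral.integral_congr (g := fun _ => 0)]
      · simp
      · intro t ht
        rw [Set.uIcc_of_le hc] at ht
        have : t - c ≤ 0 := by linarith [ht.2]
        simp [max_eq_right this, zero_pow (by omega : k ≠ 0)]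
    have e2 : ∫ t in c..1, (max (t - c) 0)^k = (1-c)^(k+1) / ((k:ℝ)+1) := by
      rw [intervalIntegral.integral_congr (g := fun t => (t - c)^k)]
      · rw [intervalIntegral.integral_comp_sub_right (fun u => u^k) c]
        simp [integral_pow]
      · intro t ht
        rw [Set.uIcc_of_le h1] at ht
        have : 0 ≤ t - c := by linarith [ht.1]
        simp [max_eq_left this]
    rw [e1, e2, zero_add, max_eq_left (by linarith)]
  · have e0 : ∫ t in (0:ℝ)..1, (max (t - c) 0)^k = 0 := by
      rw [intervalIntegral.integral_congr (g := fun _ => 0)]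
      · simp
      · intro t ht
        rw [Set.uIcc_of_le (by norm_num : (0:ℝ) ≤ 1)] at ht
        have : t - c ≤ 0 := by linarith [ht.2]
        simp [max_eq_right this, zero_pow (by omega : k ≠ 0)]
    rw [e0, max_eq_right (by linarith), zero_pow (by omega : k + 1 ≠ 0), zero_div]

def uC (d : ℕ) : Measure (Fin d → ℝ) := Measure.pi fun _ => nu

instance (d : ℕ) : IsProbabilityMeasure (uC d) := by unfold uC; infer_instance

lemma ae_fst {α β : Type*} [MeasurableSpace α] [MeasurableSpace β] (μ : Measure α)
    (ν : Measure β) [SigmaFinite ν] {p : α → Prop} (h : ∀ᵐ x ∂μ, p x) :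
    ∀ᵐ q ∂(μ.prod ν), p q.1 := by
  rw [ae_iff] at h ⊢
  have hs : {q : α × β | ¬ p q.1} = {x | ¬ p x} ×ˢ Set.univ := by ext ⟨a, b⟩; simp
  rw [hs, Measure.prod_prod, h, zero_mul]

lemma ae_snd {α β : Type*} [MeasurableSpace α] [MeasurableSpace β] (μ : Measure α)
    (ν : Measure β) [SigmaFinite ν] {p : β → Prop} (h : ∀ᵐ x ∂ν, p x) :
    ∀ᵐ q ∂(μ.prod ν), p q.2 := by
  rw [ae_iff] at h ⊢
  have hs : {q : α × β | ¬ p q.2} = Set.univ ×ˢ {x | ¬ p x} := by ext ⟨a, b⟩; simp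
  rw [hs, Measure.prod_prod, h, mul_zero]

lemma ae_cube (d : ℕ) : ∀ᵐ x ∂(uC d), ∀ j, x j ∈ Set.Icc (0:ℝ) 1 := by
  rw [ae_all_iff]
  intro j
  have : {x : Fin d → ℝ | ¬ x j ∈ Set.Icc (0:ℝ) 1}
      = Function.eval j ⁻¹' (Set.Icc (0:ℝ) 1)ᶜ := by ext x; simp [Function.eval]
  rw [ae_iff, this]
  refine Measure.pi_eval_preimage_null _ ?_
  rw [nu, Measure.restrict_apply (measurableSet_Icc.compl)]
  simp

lemma sum_mem_cube {d : ℕ} {x : Fin d → ℝ} (h : ∀ j, x j ∈ Set.Icc (0:ℝ) 1) :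
    0 ≤ ∑ i, x i ∧ ∑ i, x i ≤ d := by
  constructor
  · exact Finset.sum_nonneg fun i _ => (h i).1
  · calc ∑ i, x i ≤ ∑ _i : Fin d, (1:ℝ) := Finset.sum_le_sum fun i _ => (h i).2
    _ = d := by simp

lemma integ_decomp (m : ℕ) (j : Fin (m+1)) (g : (Fin (m+1) → ℝ) → ℝ) :
    ∫ x, g x ∂(uC (m+1))
      = ∫ q : ℝ × (Fin m → ℝ), g (j.insertNth q.1 q.2) ∂(nu.prod (uC m)) := by
  have h := measurePreserving_piFinSuccAbove (fun _ : Fin (m+1) => nu) j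
  have h2 := h.integral_comp (MeasurableEquiv.measurableEmbedding _)
    (fun q : ℝ × (Fin m → ℝ) => g (j.insertNth q.1 q.2))
  unfold uC
  rw [← h2]
  congr 1
  funext x
  simp only [MeasurableEquiv.piFinSuccAbove_apply]
  congr 1
  exact (Fin.insertNth_self_removeNth j x).symm

lemma sum_insertNth (m : ℕ) (j : Fin (m+1)) (s : ℝ) (y : Fin m → ℝ) :
    ∑ i, (j.insertNth s y) i = s + ∑ i, y i := by
  rw [Fin.sum_univ_succAbove _ j]
  simp

lemma integF : ∀ (m k : ℕ), 1 ≤ k →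
    (∫ x, (max ((∑ i, x i) - ((m:ℝ)-1)) 0)^k ∂(uC m))
      = (k.factorial : ℝ)/((m+k).factorial : ℝ)
  | 0, k, hk => by
    have : ∀ x : Fin 0 → ℝ, (max ((∑ i, x i) - ((0:ℝ)-1)) 0)^k = 1 := by
      intro x
      simp
    simp only [Nat.cast_zero]
    rw [integral_congr_ae (Eventually.of_forall this)]
    rw [integral_const]
    simp [div_self (Nat.cast_ne_zero.mpr k.factorial_ne_zero : ((k.factorial:ℝ)) ≠ 0)]
  | (m+1), k, hk => by
    rw [integ_decomp m 0 _]
    have hcont : Continuous (fun q : ℝ × (Fin m → ℝ) =>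
        (max ((q.1 + ∑ i, q.2 i) - (((m:ℝ)+1)-1)) 0)^k) := by
      refine (Continuous.max ?_ continuous_const).pow k
      exact ((continuous_fst.add (continuous_finset_sum _ fun i _ =>
        (continuous_apply i).comp continuous_snd)).sub continuous_const)
    have hnu1 : ∀ᵐ t ∂nu, t ∈ Set.Icc (0:ℝ) 1 := by
      rw [nu]; exact ae_restrict_mem measurableSet_Icc
    have hae : ∀ᵐ q ∂(nu.prod (uC m)),
        q.1 ∈ Set.Icc (0:ℝ) 1 ∧ ∀ i, q.2 i ∈ Set.Icc (0:ℝ) 1 := by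
      filter_upwards [ae_fst nu (uC m) hnu1, ae_snd nu (uC m) (ae_cube m)] with q h1 h2
      exact ⟨h1, h2⟩
    have hint : Integrable (fun q : ℝ × (Fin m → ℝ) =>
        (max ((q.1 + ∑ i, q.2 i) - (((m:ℝ)+1)-1)) 0)^k) (nu.prod (uC m)) := by
      refine Integrable.mono' (integrable_const (1:ℝ)) hcont.aestronglyMeasurable ?_
      filter_upwards [hae] with q hq
      rcases hq with ⟨h1, h2⟩
      have hs := sum_mem_cube h2
      rw [Real.norm_eq_abs, abs_pow]
      calc |max ((q.1 + ∑ i, q.2 i) - (((m:ℝ)+1)-1)) 0| ^ k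
          ≤ 1 ^ k := by
            refine pow_le_pow_left₀ (abs_nonneg _) ?_ k
            rw [abs_of_nonneg (le_max_right _ _)]
            refine max_le (by linarith [h1.2, hs.2]) one_pos.le
        _ = 1 := one_pow k
    have key : ∫ q : ℝ × (Fin m → ℝ),
          (max ((∑ i, (Fin.insertNth 0 q.1 q.2) i) - (((m+1:ℕ):ℝ)-1)) 0)^k ∂(nu.prod (uC m))
        = ∫ y, ∫ s, (max ((s + ∑ i, y i) - (((m:ℝ)+1)-1)) 0)^k ∂nu ∂(uC m) := by
      rw [show (fun q : ℝ × (Fin m → ℝ) =>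
          (max ((∑ i, (Fin.insertNth 0 q.1 q.2) i) - (((m+1:ℕ):ℝ)-1)) 0)^k)
        = fun q => (max ((q.1 + ∑ i, q.2 i) - (((m:ℝ)+1)-1)) 0)^k from by
          funext q; rw [sum_insertNth]; norm_num]
      exact MeasureTheory.integral_prod_symm _ hint
    rw [key]
    have hcongr : ∀ᵐ y ∂(uC m), (∫ s, (max ((s + ∑ i, y i) - (((m:ℝ)+1)-1)) 0)^k ∂nu)
        = (max ((∑ i, y i) - ((m:ℝ)-1)) 0)^(k+1) / ((k:ℝ)+1) := by
      filter_upwards [ae_cube m] with y hy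
      have hs := sum_mem_cube hy
      have hc : (0:ℝ) ≤ (m:ℝ) - ∑ i, y i := by linarith [hs.2]
      have := nu_pow k hk ((m:ℝ) - ∑ i, y i) hc
      rw [show (fun s => (max ((s + ∑ i, y i) - (((m:ℝ)+1)-1)) 0)^k)
          = fun s => (max (s - ((m:ℝ) - ∑ i, y i)) 0)^k from by funext s; ring_nf] at *
      rw [this]
      congr 2
      ring
    rw [integral_congr_ae hcongr]
    have : (fun y : Fin m → ℝ => (max ((∑ i, y i) - ((m:ℝ)-1)) 0)^(k+1) / ((k:ℝ)+1))
        = fun y => (max ((∑ i, y i) - ((m:ℝ)-1)) 0)^(k+1) * (1/((k:ℝ)+1)) := by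
      funext y; ring
    rw [this, integral_mul_const, integF m (k+1) (by omega)]
    have hk1 : ((k:ℝ)+1) ≠ 0 := by positivity
    rw [Nat.factorial_succ]
    push_cast
    rw [show (m + (k+1)) = (m + 1 + k) from by omega]
    field_simp

def fdp' (d : ℕ) (x : Fin d → ℝ) : ℝ := if (d : ℝ) - 1 < ∑ j, x j then 1 else 0

lemma meas_sum (d : ℕ) : Measurable (fun x : Fin d → ℝ => ∑ i, x i) :=
  Finset.measurable_sum _ fun i _ => measurable_pi_apply i

lemma meas_fdp' (d : ℕ) : Measurable (fdp' d) := by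
  unfold fdp'
  exact Measurable.ite (measurableSet_lt measurable_const (meas_sum d))
    measurable_const measurable_const

lemma fdp'_bd (d : ℕ) (x : Fin d → ℝ) : |fdp' d x| ≤ 1 := by
  unfold fdp'; split_ifs <;> norm_num

lemma update_insertNth {m : ℕ} (j : Fin (m+1)) (s t : ℝ) (y : Fin m → ℝ) :
    Function.update (Fin.insertNth (α := fun _ => ℝ) j s y) j t
      = Fin.insertNth (α := fun _ => ℝ) j t y := by
  funext i
  by_cases h : i = j
  · subst h; rw [Function.update_self, Fin.insertNth_apply_same]
  · obtain ⟨k, rfl⟩ := Fin.exists_succAbove_eq h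
    rw [Function.update_of_ne h, Fin.insertNth_apply_succAbove,
      Fin.insertNth_apply_succAbove]

lemma integral_eval (m : ℕ) (j : Fin (m+1)) (φ : ℝ → ℝ) (hφ : Measurable φ)
    (hb : ∀ t, |φ t| ≤ 1) :
    ∫ z, φ (z j) ∂(uC (m+1)) = ∫ t, φ t ∂nu := by
  rw [integ_decomp m j]
  have h1 : (fun q : ℝ × (Fin m → ℝ) => φ ((Fin.insertNth (α := fun _ => ℝ) j q.1 q.2) j))
      = fun q => φ q.1 := by
    funext q; rw [Fin.insertNth_apply_same]
  rw [h1]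
  have hint : Integrable (fun q : ℝ × (Fin m → ℝ) => φ q.1) (nu.prod (uC m)) := by
    refine Integrable.mono' (integrable_const (1:ℝ))
      ((hφ.comp measurable_fst).aestronglyMeasurable) ?_
    exact Eventually.of_forall fun q => by rw [Real.norm_eq_abs]; exact hb q.1
  rw [MeasureTheory.integral_prod _ hint]
  simp

lemma meas_inner (m : ℕ) : Measurable (fun q : ℝ × (Fin m → ℝ) =>
    if ((m:ℝ) - ∑ i, q.2 i) < q.1 then (1:ℝ) else 0) :=
  Measurable.ite (measurableSet_lt (measurable_const.sub ((meas_sum m).comp measurable_snd))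
    measurable_fst) measurable_const measurable_const

lemma Ef (m : ℕ) : ∫ x, fdp' (m+1) x ∂(uC (m+1)) = 1/(((m+1).factorial : ℕ) : ℝ) := by
  rw [integ_decomp m 0]
  have hfun : (fun q : ℝ × (Fin m → ℝ) =>
        fdp' (m+1) (Fin.insertNth (α := fun _ => ℝ) 0 q.1 q.2))
      = fun q => if ((m:ℝ) - ∑ i, q.2 i) < q.1 then 1 else 0 := by
    funext q
    unfold fdp'
    rw [sum_insertNth]
    refine if_congr ?_ rfl rfl
    push_cast
    constructor <;> intro <;> linarith
  rw [hfun]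
  have hint : Integrable (fun q : ℝ × (Fin m → ℝ) =>
      if ((m:ℝ) - ∑ i, q.2 i) < q.1 then (1:ℝ) else 0) (nu.prod (uC m)) := by
    refine Integrable.mono' (integrable_const (1:ℝ))
      (meas_inner m).aestronglyMeasurable ?_
    refine Eventually.of_forall fun q => ?_
    rw [Real.norm_eq_abs]
    split_ifs <;> norm_num
  rw [MeasureTheory.integral_prod_symm _ hint]
  have hcongr : ∀ᵐ y ∂(uC m),
      (∫ s, (if ((m:ℝ) - ∑ i, y i) < s then (1:ℝ) else 0) ∂nu)
        = (max ((∑ i, y i) - ((m:ℝ)-1)) 0)^1 := by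
    filter_upwards [ae_cube m] with y hy
    have hs := sum_mem_cube hy
    rw [nu_ind _ (by linarith [hs.2]), pow_one]
    congr 1
    ring
  rw [integral_congr_ae hcongr, integF m 1 le_rfl]
  norm_num

lemma measQ (m : ℕ) : Measurable (fun y : Fin m → ℝ => max ((∑ i, y i) - ((m:ℝ)-1)) 0) :=
  ((meas_sum m).sub measurable_const).max measurable_const

lemma measB (c : ℝ) : Measurable (fun t : ℝ => if c < t then (1:ℝ) else 0) :=
  Measurable.ite (measurableSet_lt measurable_const measurable_id)
    measurable_const measurable_const

lemma integrableB (c : ℝ) : Integrable (fun t : ℝ => if c < t then (1:ℝ) else 0) nu := by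
  refine Integrable.mono' (integrable_const (1:ℝ)) (measB c).aestronglyMeasurable ?_
  refine Eventually.of_forall fun t => ?_
  rw [Real.norm_eq_abs]
  split_ifs <;> norm_num

/-- inner 1-d computation: `∫ t, (a − 1{c<t})² dν = a(1−2q)+q` for `q = max (1−c) 0`. -/
lemma inner_sq (a c : ℝ) (ha : a = 0 ∨ a = 1) (hc : 0 ≤ c) :
    ∫ t, (a - (if c < t then (1:ℝ) else 0))^2 ∂nu
      = a * (1 - 2 * max (1-c) 0) + max (1-c) 0 := by
  have hexp : (fun t => (a - (if c < t then (1:ℝ) else 0))^2)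
      = fun t => a * (1 - 2 * (if c < t then (1:ℝ) else 0)) + (if c < t then (1:ℝ) else 0) := by
    funext t
    rcases ha with h | h <;> subst h <;> split_ifs <;> ring
  rw [hexp]
  have h1 : Integrable (fun t => a * (1 - 2 * (if c < t then (1:ℝ) else 0))) nu :=
    ((integrable_const (1:ℝ)).sub ((integrableB c).const_mul 2)).const_mul a
  rw [integral_add h1 (integrableB c), integral_const_mul, integral_sub (integrable_const 1)
    ((integrableB c).const_mul 2), integral_const_mul, integral_const, nu_ind c hc]
  have : nu.real Set.univ = 1 := by simp
  rw [this]
  simp only [smul_eq_mul]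
  ring

lemma meas_update (m : ℕ) (j : Fin (m+1)) :
    Measurable (fun p : (Fin (m+1) → ℝ) × (Fin (m+1) → ℝ) => Function.update p.1 j (p.2 j)) := by
  rw [measurable_pi_iff]
  intro i
  by_cases h : i = j
  · subst h
    simp only [Function.update_self]
    exact (measurable_pi_apply _).comp measurable_snd
  · simp only [Function.update_apply, if_neg h]
    exact (measurable_pi_apply _).comp measurable_fst

lemma fdp'_sq_bd (m : ℕ) (a b : Fin m → ℝ) : (fdp' m a - fdp' m b)^2 ≤ 1 := by
  unfold fdp'; split_ifs <;> norm_num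

lemma tau_int (m : ℕ) (j : Fin (m+1)) :
    (∫ p : (Fin (m+1) → ℝ) × (Fin (m+1) → ℝ),
        (fdp' (m+1) p.1 - fdp' (m+1) (Function.update p.1 j (p.2 j)))^2
        ∂((uC (m+1)).prod (uC (m+1))))
      = 2/(((m+1).factorial : ℕ) : ℝ) - 4/(((m+2).factorial : ℕ) : ℝ) := by
  have hintG : Integrable (fun p : (Fin (m+1) → ℝ) × (Fin (m+1) → ℝ) =>
      (fdp' (m+1) p.1 - fdp' (m+1) (Function.update p.1 j (p.2 j)))^2)
      ((uC (m+1)).prod (uC (m+1))) := by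
    refine Integrable.mono' (integrable_const (1:ℝ))
      (Measurable.aestronglyMeasurable ?_) (Eventually.of_forall fun p => ?_)
    · exact (((meas_fdp' _).comp measurable_fst).sub
        ((meas_fdp' _).comp (meas_update m j))).pow_const 2
    · rw [Real.norm_eq_abs, abs_of_nonneg (sq_nonneg _)]
      exact fdp'_sq_bd _ _ _
  rw [MeasureTheory.integral_prod _ hintG]
  have hB : ∀ x : Fin (m+1) → ℝ,
      (∫ z, (fdp' (m+1) x - fdp' (m+1) (Function.update x j (z j)))^2 ∂(uC (m+1)))
        = ∫ t, (fdp' (m+1) x - fdp' (m+1) (Function.update x j t))^2 ∂nu := by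
    intro x
    refine integral_eval m j
      (fun t => (fdp' (m+1) x - fdp' (m+1) (Function.update x j t))^2) ?_ ?_
    · exact (measurable_const.sub ((meas_fdp' _).comp (measurable_update x))).pow_const 2
    · intro t
      rw [abs_of_nonneg (sq_nonneg _)]
      exact fdp'_sq_bd _ _ _
  rw [integral_congr_ae (Eventually.of_forall hB)]
  rw [integ_decomp m j]
  -- rewrite a.e. to the explicit function g
  set Q : (Fin m → ℝ) → ℝ := fun y => max ((∑ i, y i) - ((m:ℝ)-1)) 0 with hQ
  have hcongr1 : ∀ᵐ q : ℝ × (Fin m → ℝ) ∂(nu.prod (uC m)),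
      (∫ t, (fdp' (m+1) (Fin.insertNth (α := fun _ => ℝ) j q.1 q.2)
          - fdp' (m+1) (Function.update (Fin.insertNth (α := fun _ => ℝ) j q.1 q.2) j t))^2 ∂nu)
        = (if ((m:ℝ) - ∑ i, q.2 i) < q.1 then (1:ℝ) else 0) * (1 - 2 * Q q.2) + Q q.2 := by
    filter_upwards [ae_snd nu (uC m) (ae_cube m)] with q hy
    have hs := sum_mem_cube hy
    have hc : (0:ℝ) ≤ (m:ℝ) - ∑ i, q.2 i := by linarith [hs.2]
    have hf1 : ∀ s : ℝ, fdp' (m+1) (Fin.insertNth (α := fun _ => ℝ) j s q.2)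
        = if ((m:ℝ) - ∑ i, q.2 i) < s then (1:ℝ) else 0 := by
      intro s
      unfold fdp'
      rw [sum_insertNth]
      refine if_congr ?_ rfl rfl
      push_cast
      constructor <;> intro <;> linarith
    have hupd : ∀ t : ℝ, Function.update (Fin.insertNth (α := fun _ => ℝ) j q.1 q.2) j t
        = Fin.insertNth (α := fun _ => ℝ) j t q.2 := fun t => update_insertNth j q.1 t q.2
    simp only [hupd, hf1]
    rw [inner_sq _ _ (by split_ifs <;> simp) hc]
    have : max (1 - ((m:ℝ) - ∑ i, q.2 i)) 0 = Q q.2 := by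
      rw [hQ]; congr 1; ring
    rw [this]
  rw [integral_congr_ae hcongr1]
  have hintg : Integrable (fun q : ℝ × (Fin m → ℝ) =>
      (if ((m:ℝ) - ∑ i, q.2 i) < q.1 then (1:ℝ) else 0) * (1 - 2 * Q q.2) + Q q.2)
      (nu.prod (uC m)) := by
    refine Integrable.mono' (integrable_const (4:ℝ)) (Measurable.aestronglyMeasurable ?_) ?_
    · exact ((meas_inner m).mul (measurable_const.sub
        (((measQ m).comp measurable_snd).const_mul 2))).add ((measQ m).comp measurable_snd)
    · filter_upwards [ae_snd nu (uC m) (ae_cube m)] with q hy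
      have hs := sum_mem_cube hy
      have hQ1 : 0 ≤ Q q.2 ∧ Q q.2 ≤ 1 := by
        constructor
        · exact le_max_right _ _
        · rw [hQ]
          exact max_le (by linarith [hs.2]) one_pos.le
      rw [Real.norm_eq_abs]
      have h1 : |if ((m:ℝ) - ∑ i, q.2 i) < q.1 then (1:ℝ) else 0| ≤ 1 := by
        split_ifs <;> norm_num
      calc |(if ((m:ℝ) - ∑ i, q.2 i) < q.1 then (1:ℝ) else 0) * (1 - 2 * Q q.2) + Q q.2|
          ≤ |(if ((m:ℝ) - ∑ i, q.2 i) < q.1 then (1:ℝ) else 0)| * |1 - 2 * Q q.2| + |Q q.2| := by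
            refine le_trans (abs_add_le _ _) ?_
            rw [abs_mul]
        _ ≤ 1 * 3 + 1 := by
            refine add_le_add (mul_le_mul h1 ?_ (abs_nonneg _) one_pos.le) ?_
            · rw [abs_le]; constructor <;> nlinarith [hQ1.1, hQ1.2]
            · rw [abs_le]; constructor <;> nlinarith [hQ1.1, hQ1.2]
        _ ≤ 4 := by norm_num
  rw [MeasureTheory.integral_prod_symm _ hintg]
  have hcongr2 : ∀ᵐ y ∂(uC m),
      (∫ s, ((if ((m:ℝ) - ∑ i, y i) < s then (1:ℝ) else 0) * (1 - 2 * Q y) + Q y) ∂nu)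
        = 2 * (Q y)^1 - 2 * (Q y)^2 := by
    filter_upwards [ae_cube m] with y hy
    have hs := sum_mem_cube hy
    have hc : (0:ℝ) ≤ (m:ℝ) - ∑ i, y i := by linarith [hs.2]
    rw [integral_add ((integrableB _).mul_const _) (integrable_const _),
      integral_mul_const, nu_ind _ hc, integral_const]
    have h1 : nu.real Set.univ = 1 := by simp
    have h2 : max (1 - ((m:ℝ) - ∑ i, y i)) 0 = Q y := by
      rw [hQ]; congr 1; ring
    rw [h1, h2]
    simp only [smul_eq_mul]
    ring
  rw [integral_congr_ae hcongr2]
  have hiQ1 : Integrable (fun y => (Q y)^1) (uC m) := by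
    refine Integrable.mono' (integrable_const (1:ℝ))
      (Measurable.aestronglyMeasurable (by exact (measQ m).pow_const 1)) ?_
    filter_upwards [ae_cube m] with y hy
    have hs := sum_mem_cube hy
    rw [Real.norm_eq_abs, pow_one, abs_of_nonneg (le_max_right _ _), hQ]
    exact max_le (by linarith [hs.2]) one_pos.le
  have hiQ2 : Integrable (fun y => (Q y)^2) (uC m) := by
    refine Integrable.mono' (integrable_const (1:ℝ))
      (Measurable.aestronglyMeasurable (by exact (measQ m).pow_const 2)) ?_
    filter_upwards [ae_cube m] with y hy
    have hs := sum_mem_cube hy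
    rw [Real.norm_eq_abs, abs_of_nonneg (by positivity)]
    have : Q y ≤ 1 := by rw [hQ]; exact max_le (by linarith [hs.2]) one_pos.le
    calc (Q y)^2 ≤ 1^2 := pow_le_pow_left₀ (le_max_right _ _) this 2
      _ = 1 := one_pow 2
  rw [integral_sub ((hiQ1).const_mul 2) ((hiQ2).const_mul 2), integral_const_mul,
    integral_const_mul, hQ]
  rw [integF m 1 le_rfl, integF m 2 (by omega)]
  simp only [Nat.factorial_one, Nat.factorial_two, Nat.cast_one, Nat.cast_ofNat]
  ring

lemma var_eq (m : ℕ) : variance (fdp' (m+1)) (uC (m+1))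
    = 1/(((m+1).factorial : ℕ) : ℝ) - (1/(((m+1).factorial : ℕ) : ℝ))^2 := by
  have hmem : MemLp (fdp' (m+1)) 2 (uC (m+1)) :=
    MemLp.of_bound (meas_fdp' _).aestronglyMeasurable 1
      (Eventually.of_forall fun x => by rw [Real.norm_eq_abs]; exact fdp'_bd _ x)
  rw [variance_eq_sub hmem]
  have h2 : (fdp' (m+1))^2 = fdp' (m+1) := by
    funext x
    simp only [Pi.pow_apply]
    unfold fdp'
    split_ifs <;> norm_num
  rw [h2, Ef m]

lemma unifCube_eq (d : ℕ) : unifCube d = uC d := rfl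

lemma fdp_zero (d : ℕ) : fdp d 0 = fdp' d := by
  funext x; simp [fdp, fdp']

lemma sobol_eq (m : ℕ) (j : Fin (m+1)) :
    sobolTauU (m+1) (fdp (m+1) 0) j
      = 1/(((m+1).factorial : ℕ) : ℝ) - 2/(((m+2).factorial : ℕ) : ℝ) := by
  unfold sobolTauU
  rw [fdp_zero, unifCube_eq, tau_int m j]
  ring

lemma fact_pos (n : ℕ) : (0:ℝ) < (n.factorial : ℝ) :=
  Nat.cast_pos.mpr n.factorial_pos

lemma meanDim_formula (d : ℕ) (hd : 2 ≤ d) :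
    meanDimU d (fdp d 0)
      = d * (1 - 2 / ((d : ℝ) + 1)) / (1 - 1 / (d.factorial : ℝ)) := by
  obtain ⟨m, rfl⟩ : ∃ m, d = m + 1 := ⟨d - 1, by omega⟩
  unfold meanDimU
  rw [fdp_zero, unifCube_eq, var_eq m]
  have hsum : ∑ j : Fin (m+1), sobolTauU (m+1) (fdp' (m+1)) j
      = ((m:ℝ)+1) * (1/(((m+1).factorial : ℕ) : ℝ) - 2/(((m+2).factorial : ℕ) : ℝ)) := by
    rw [← fdp_zero]
    rw [Finset.sum_congr rfl fun j _ => sobol_eq m j, Finset.sum_const, Finset.card_univ]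
    simp only [Fintype.card_fin, nsmul_eq_mul]
    push_cast
    ring
  rw [hsum]
  have hA : (0:ℝ) < (((m+1).factorial : ℕ) : ℝ) := fact_pos (m+1)
  have hA2 : (2:ℝ) ≤ (((m+1).factorial : ℕ) : ℝ) := by
    have h1 : m + 1 ≤ (m+1).factorial := Nat.self_le_factorial _
    have h2 : 2 ≤ (m+1).factorial := le_trans (by omega) h1
    exact_mod_cast h2
  have hfact : (((m+2).factorial : ℕ) : ℝ) = ((m:ℝ)+2) * (((m+1).factorial : ℕ) : ℝ) := by
    rw [show m+2 = (m+1)+1 from rfl, Nat.factorial_succ]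
    push_cast
    ring
  have h1A : 1 - 1/(((m+1).factorial : ℕ) : ℝ) ≠ 0 := by
    have h3 : 1/(((m+1).factorial : ℕ) : ℝ) ≤ 1/2 :=
      one_div_le_one_div_of_le (by norm_num) hA2
    intro hcontra
    rw [sub_eq_zero] at hcontra
    rw [← hcontra] at h3
    norm_num at h3
  have hm2 : ((m:ℝ)+2) ≠ 0 := by positivity
  have hAne : (((m+1).factorial : ℕ) : ℝ) ≠ 0 := ne_of_gt hA
  rw [hfact, Nat.cast_add, Nat.cast_one]
  rw [show ((m:ℝ)+1)*(1/(((m+1).factorial : ℕ) : ℝ)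
        - 2/(((m:ℝ)+2)*(((m+1).factorial : ℕ) : ℝ)))
      = (1/(((m+1).factorial : ℕ) : ℝ))*(((m:ℝ)+1)*(1 - 2/((m:ℝ)+1+1))) from by
    field_simp
    ring]
  rw [show 1/(((m+1).factorial : ℕ) : ℝ) - (1/(((m+1).factorial : ℕ) : ℝ))^2
      = (1/(((m+1).factorial : ℕ) : ℝ))*(1 - 1/(((m+1).factorial : ℕ) : ℝ)) from by ring]
  rw [mul_div_mul_left _ _ (one_div_ne_zero hAne)]

lemma diff_formula (d : ℕ) (hd : 2 ≤ d) :
    meanDimU d (fdp d 0) - ((d:ℝ) - 2)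
      = (2/((d:ℝ)+1) + ((d:ℝ)-2)/(d.factorial : ℝ)) / (1 - 1/(d.factorial : ℝ)) := by
  rw [meanDim_formula d hd]
  have hA : (0:ℝ) < (d.factorial : ℝ) := fact_pos d
  have hA2 : (2:ℝ) ≤ (d.factorial : ℝ) := by
    have h1 : d ≤ d.factorial := Nat.self_le_factorial d
    have h2 : 2 ≤ d.factorial := le_trans hd h1
    exact_mod_cast h2
  have h1A : 1 - 1/(d.factorial : ℝ) ≠ 0 := by
    have h3 : 1/(d.factorial : ℝ) ≤ 1/2 := one_div_le_one_div_of_le (by norm_num) hA2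
    intro hc
    rw [sub_eq_zero] at hc
    rw [← hc] at h3
    norm_num at h3
  have hd1 : ((d:ℝ)+1) ≠ 0 := by positivity
  rw [eq_div_iff h1A, sub_mul, div_mul_cancel₀ _ h1A]
  field_simp
  ring

lemma limit_part : Tendsto (fun d : ℕ => meanDimU d (fdp d 0) - ((d : ℝ) - 2))
    atTop (nhds 0) := by
  have h1 : Tendsto (fun d : ℕ => 1/(d.factorial : ℝ)) atTop (nhds 0) := by
    refine tendsto_of_tendsto_of_tendsto_of_le_of_le' tendsto_const_nhds
      tendsto_one_div_atTop_nhds_zero_nat ?_ ?_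
    · exact Eventually.of_forall fun d => by positivity
    · filter_upwards [eventually_ge_atTop 1] with d hd
      refine one_div_le_one_div_of_le (by exact_mod_cast hd) ?_
      exact_mod_cast Nat.self_le_factorial d
  have h2 : Tendsto (fun d : ℕ => ((d:ℝ)-2)/(d.factorial : ℝ)) atTop (nhds 0) := by
    refine tendsto_of_tendsto_of_tendsto_of_le_of_le'
      tendsto_const_nhds (FloorSemiring.tendsto_pow_div_factorial_atTop (2:ℝ)) ?_ ?_
    · filter_upwards [eventually_ge_atTop 2] with d hd
      have : (0:ℝ) ≤ (d:ℝ) - 2 := by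
        have : (2:ℝ) ≤ d := by exact_mod_cast hd
        linarith
      positivity
    · refine Eventually.of_forall fun d => ?_
      have hx : ((d:ℝ)) ≤ 2^d := by
        have h := (Nat.lt_two_pow_self (n := d)).le
        calc ((d:ℝ)) ≤ ((2^d : ℕ) : ℝ) := by exact_mod_cast h
          _ = 2^d := by push_cast; ring
      gcongr
      linarith
  have h3 : Tendsto (fun d : ℕ => 2/((d:ℝ)+1)) atTop (nhds 0) := by
    have hb : Tendsto (fun d : ℕ => 2 * (1/(d:ℝ))) atTop (nhds (2 * 0)) :=
      tendsto_one_div_atTop_nhds_zero_nat.const_mul 2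
    rw [mul_zero] at hb
    refine tendsto_of_tendsto_of_tendsto_of_le_of_le' tendsto_const_nhds hb ?_ ?_
    · exact Eventually.of_forall fun d => by positivity
    · filter_upwards [eventually_ge_atTop 1] with d hd
      have hd' : (1:ℝ) ≤ d := by exact_mod_cast hd
      rw [mul_one_div]
      gcongr
      linarith
  have hden : Tendsto (fun d : ℕ => 1 - 1/(d.factorial : ℝ)) atTop (nhds (1 - 0)) :=
    tendsto_const_nhds.sub h1
  rw [sub_zero] at hden
  have hnum := h3.add h2
  rw [add_zero] at hnum
  have hfinal := hnum.div hden one_ne_zero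
  rw [zero_div] at hfinal
  refine Tendsto.congr' ?_ hfinal
  filter_upwards [eventually_ge_atTop 2] with d hd
  exact (diff_formula d hd).symm


/-- Mean dimension of the jump cusp `f_{d,0}`:
`ν(f_{d,0}) = d(1 − 2/(d+1))/(1 − 1/d!)`, and `ν(f_{d,0}) = d − 2 + o(1)`. -/
theorem stmt12 :
    (∀ d : ℕ, 2 ≤ d →
      meanDimU d (fdp d 0)
        = d * (1 - 2 / ((d : ℝ) + 1)) / (1 - 1 / (d.factorial : ℝ)))
    ∧ Tendsto (fun d : ℕ => meanDimU d (fdp d 0) - ((d : ℝ) - 2))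
        atTop (nhds 0) :=
  ⟨meanDim_formula, limit_part⟩

end
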